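/- Let λ(z) = e^z/(1 + e^z) denote the logistic CDF. For all a, b ∈ ℝ: log(1 + e^{a+b}) − log(1 + e^{a}) − b λ(a) ≥ λ(a)(1 − λ(a)) (e^{−|b|} + |b| − 1) ≥ λ(a)(1 − λ(a)) (b²/2 − |b|³/6). In particular, since e^{−x} + x − 1 ≥ x²/2 − x³/6 for all x ≥ 0, the Bregman remainder of the logistic log-partition function is bounded below by λ(a)(1 − λ(a)) times these quantities. -/

import Mathlib

/-- The logistic CDF `λ(z) = e^z / (1 + e^z)`. -/
noncomputable def logisticCDF (z : ℝ) : ℝ := Real.exp z / (1 + Real.exp z)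

section helpers

/-- If `f 0 = 0` and `f' ≥ 0` on `[0, ∞)`, then `f ≥ 0` on `[0, ∞)`. -/
lemma nonneg_on_Ici_of_deriv {f f' : ℝ → ℝ} (hd : ∀ x, HasDerivAt f (f' x) x)
    (h0 : f 0 = 0) (hf' : ∀ x, 0 ≤ x → 0 ≤ f' x) : ∀ x, 0 ≤ x → 0 ≤ f x := by
  intro x hx
  have hm : MonotoneOn f (Set.Ici 0) := by
    apply monotoneOn_of_deriv_nonneg (convex_Ici 0)
    · exact fun y _ => (hd y).differentiableAt.continuousAt.continuousWithinAt
    · exact fun y _ => (hd y).differentiableAt.differentiableWithinAt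
    · intro y hy
      rw [(hd y).deriv]
      exact hf' y (le_of_lt (by simpa using hy))
  have := hm Set.self_mem_Ici (show x ∈ Set.Ici (0:ℝ) from hx) hx
  linarith [h0 ▸ this]

/-- If `f 0 = 0` and `f' ≥ 0` on `(-∞, 0]`, then `f ≤ 0` on `(-∞, 0]`. -/
lemma nonpos_on_Iic_of_deriv {f f' : ℝ → ℝ} (hd : ∀ x, HasDerivAt f (f' x) x)
    (h0 : f 0 = 0) (hf' : ∀ x, x ≤ 0 → 0 ≤ f' x) : ∀ x, x ≤ 0 → f x ≤ 0 := by
  intro x hx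
  have hm : MonotoneOn f (Set.Iic 0) := by
    apply monotoneOn_of_deriv_nonneg (convex_Iic 0)
    · exact fun y _ => (hd y).differentiableAt.continuousAt.continuousWithinAt
    · exact fun y _ => (hd y).differentiableAt.differentiableWithinAt
    · intro y hy
      rw [(hd y).deriv]
      exact hf' y (le_of_lt (by simpa using hy))
  have := hm (show x ∈ Set.Iic (0:ℝ) from hx) Set.self_mem_Iic hx
  linarith [h0 ▸ this]

/-- If `f 0 = 0` and `f' ≤ 0` on `(-∞, 0]`, then `f ≥ 0` on `(-∞, 0]`. -/
lemma nonneg_on_Iic_of_deriv {f f' : ℝ → ℝ} (hd : ∀ x, HasDerivAt f (f' x) x)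
    (h0 : f 0 = 0) (hf' : ∀ x, x ≤ 0 → f' x ≤ 0) : ∀ x, x ≤ 0 → 0 ≤ f x := by
  intro x hx
  have hm : AntitoneOn f (Set.Iic 0) := by
    apply antitoneOn_of_deriv_nonpos (convex_Iic 0)
    · exact fun y _ => (hd y).differentiableAt.continuousAt.continuousWithinAt
    · exact fun y _ => (hd y).differentiableAt.differentiableWithinAt
    · intro y hy
      rw [(hd y).deriv]
      exact hf' y (le_of_lt (by simpa using hy))
  have := hm (show x ∈ Set.Iic (0:ℝ) from hx) Set.self_mem_Iic hx
  linarith [h0 ▸ this]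

lemma exp_cubic_bound : ∀ x : ℝ, 0 ≤ x → Real.exp (-x) + x - 1 ≥ x ^ 2 / 2 - x ^ 3 / 6 := by
  intro x hx
  have hp : ∀ x : ℝ, 0 ≤ x → 0 ≤ 1 - x + x ^ 2 / 2 - Real.exp (-x) := by
    apply nonneg_on_Ici_of_deriv (f' := fun x => -1 + x + Real.exp (-x))
    · intro x
      have h1 : HasDerivAt (fun z : ℝ => Real.exp (-z)) (-Real.exp (-x)) x := by
        simpa using ((hasDerivAt_id x).neg.exp)
      have h2 : HasDerivAt (fun x : ℝ => 1 - x + x ^ 2 / 2) (-1 + x) x := by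
        have : HasDerivAt (fun x : ℝ => 1 - x + x ^ 2 / 2) (0 - 1 + (2:ℕ) * x ^ 1 / 2) x :=
          (((hasDerivAt_const x (1:ℝ)).sub (hasDerivAt_id x)).add
            ((hasDerivAt_pow 2 x).div_const 2))
        convert this using 1; push_cast; ring
      simpa using h2.fun_sub h1
    · simp
    · intro x hx
      have := Real.add_one_le_exp (-x)
      linarith
  have hmain : ∀ x : ℝ, 0 ≤ x → 0 ≤ Real.exp (-x) + x - 1 - (x ^ 2 / 2 - x ^ 3 / 6) := by
    apply nonneg_on_Ici_of_deriv
      (f' := fun x => -Real.exp (-x) + 1 - (x - x ^ 2 / 2))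
    · intro y
      have h1 : HasDerivAt (fun x : ℝ => Real.exp (-x)) (-Real.exp (-y)) y := by
        simpa using ((hasDerivAt_id y).neg.exp)
      have h2 : HasDerivAt (fun x : ℝ => x ^ 2 / 2 - x ^ 3 / 6) (y - y ^ 2 / 2) y := by
        have : HasDerivAt (fun x : ℝ => x ^ 2 / 2 - x ^ 3 / 6)
            ((2:ℕ) * y ^ 1 / 2 - (3:ℕ) * y ^ 2 / 6) y :=
          ((hasDerivAt_pow 2 y).div_const 2).sub ((hasDerivAt_pow 3 y).div_const 6)
        convert this using 1; push_cast; ring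
      have := ((h1.fun_add (hasDerivAt_id y)).fun_sub (hasDerivAt_const y (1:ℝ))).fun_sub h2
      convert this using 1
      rotate_left 3
      simp
      all_goals rfl
    · simp
    · intro y hy
      have := hp y hy
      linarith
  have := hmain x hx
  linarith

end helpers

theorem logistic_bregman_lower_bound :
    (∀ a b : ℝ,
      Real.log (1 + Real.exp (a + b)) - Real.log (1 + Real.exp a) - b * logisticCDF a ≥
        logisticCDF a * (1 - logisticCDF a) * (Real.exp (-|b|) + |b| - 1) ∧
      logisticCDF a * (1 - logisticCDF a) * (Real.exp (-|b|) + |b| - 1) ≥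
        logisticCDF a * (1 - logisticCDF a) * (b ^ 2 / 2 - |b| ^ 3 / 6)) ∧
    (∀ x : ℝ, 0 ≤ x → Real.exp (-x) + x - 1 ≥ x ^ 2 / 2 - x ^ 3 / 6) := by
  constructor
  · intro a b
    set u := Real.exp a with hu
    have hu0 : 0 < u := Real.exp_pos a
    have h1u : (0:ℝ) < 1 + u := by linarith
    have hC : logisticCDF a * (1 - logisticCDF a) = u / (1 + u) ^ 2 := by
      unfold logisticCDF
      rw [← hu]
      have hne : (1 + u) ≠ 0 := ne_of_gt h1u
      rw [div_mul_eq_mul_div, div_eq_div_iff hne (by positivity)]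
      field_simp
      ring
    have hCpos : 0 < u / (1 + u) ^ 2 := div_pos hu0 (by positivity)
    set C := u / (1 + u) ^ 2 with hCdef
    -- derivative facts
    have hL : ∀ t : ℝ, HasDerivAt (fun t => Real.log (1 + Real.exp (a + t)))
        (Real.exp (a + t) / (1 + Real.exp (a + t))) t := by
      intro t
      have he : HasDerivAt (fun t : ℝ => Real.exp (a + t)) (Real.exp (a + t)) t := by
        have : HasDerivAt (fun t : ℝ => a + t) 1 t := by
          simpa using (hasDerivAt_const t a).fun_add (hasDerivAt_id t)
        simpa using this.exp
      have h1e : HasDerivAt (fun t : ℝ => 1 + Real.exp (a + t)) (Real.exp (a + t)) t := by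
        simpa using (hasDerivAt_const t (1:ℝ)).fun_add he
      have hne : (1 : ℝ) + Real.exp (a + t) ≠ 0 := by positivity
      simpa using h1e.log hne
    have key : Real.log (1 + Real.exp (a + b)) - Real.log (1 + Real.exp a) -
        b * logisticCDF a ≥ C * (Real.exp (-|b|) + |b| - 1) := by
      have hla : logisticCDF a = u / (1 + u) := by unfold logisticCDF; rw [← hu]
      rcases le_or_gt 0 b with hb | hb
      · -- b ≥ 0 case
        rw [abs_of_nonneg hb]
        -- h'(t) = λ(a+t) - λ(a) - C(1 - e^{-t}) ≥ 0 on [0,∞)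
        have hstep1 : ∀ t : ℝ, 0 ≤ t →
            0 ≤ Real.exp (a + t) / (1 + Real.exp (a + t)) - u / (1 + u) -
              C * (1 - Real.exp (-t)) := by
          apply nonneg_on_Ici_of_deriv
            (f' := fun t => Real.exp (a + t) / (1 + Real.exp (a + t)) ^ 2 - C * Real.exp (-t))
          · intro t
            have he : HasDerivAt (fun t : ℝ => Real.exp (a + t)) (Real.exp (a + t)) t := by
              have : HasDerivAt (fun t : ℝ => a + t) 1 t := by
                simpa using (hasDerivAt_const t a).fun_add (hasDerivAt_id t)
              simpa using this.exp
            have h1e : HasDerivAt (fun t : ℝ => 1 + Real.exp (a + t)) (Real.exp (a + t)) t := by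
              simpa using (hasDerivAt_const t (1:ℝ)).fun_add he
            have hne : (1 : ℝ) + Real.exp (a + t) ≠ 0 := by positivity
            have hdiv : HasDerivAt (fun t => Real.exp (a + t) / (1 + Real.exp (a + t)))
                ((Real.exp (a + t) * (1 + Real.exp (a + t)) -
                  Real.exp (a + t) * Real.exp (a + t)) / (1 + Real.exp (a + t)) ^ 2) t :=
              he.div h1e hne
            have hexp : HasDerivAt (fun t : ℝ => Real.exp (-t)) (-Real.exp (-t)) t := by
              simpa using ((hasDerivAt_id t).neg.exp)
            have h2 : HasDerivAt (fun t : ℝ => u / (1 + u) + C * (1 - Real.exp (-t)))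
                (C * Real.exp (-t)) t := by
              have := (hasDerivAt_const t ((1:ℝ))).sub hexp
              have := ((hasDerivAt_const t (u / (1 + u)))).fun_add
                (((hasDerivAt_const t ((1:ℝ))).fun_sub hexp).const_mul C)
              simpa using this
            have := hdiv.fun_sub h2
            convert this using 1
            rotate_left 2
            · ext s; ring
            · field_simp
              ring
            all_goals rfl
          · simp [hu]
          · intro t ht
            have hexp1 : (1:ℝ) ≤ Real.exp t := Real.one_le_exp ht
            have hepos : 0 < Real.exp (a + t) := Real.exp_pos _
            have h1epos : (0:ℝ) < 1 + Real.exp (a + t) := by linarith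
            have heat : Real.exp (a + t) = u * Real.exp t := by
              rw [hu, ← Real.exp_add]
            have hent : Real.exp (-t) = 1 / Real.exp t := by
              rw [Real.exp_neg]; exact (inv_eq_one_div _)
            have het : 0 < Real.exp t := Real.exp_pos t
            rw [heat, hent, hCdef, sub_nonneg, mul_one_div, div_div,
              div_le_div_iff₀ (by positivity) (by positivity)]
            nlinarith [mul_nonneg hu0.le (mul_nonneg (sub_nonneg.mpr hexp1)
              (by positivity : (0:ℝ) ≤ Real.exp t + 2 * u * Real.exp t + 1))]
        -- now h(t) itself
        have hstep2 : ∀ t : ℝ, 0 ≤ t →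
            0 ≤ Real.log (1 + Real.exp (a + t)) - Real.log (1 + u) - t * (u / (1 + u)) -
              C * (Real.exp (-t) + t - 1) := by
          apply nonneg_on_Ici_of_deriv
            (f' := fun t => Real.exp (a + t) / (1 + Real.exp (a + t)) - u / (1 + u) -
              C * (1 - Real.exp (-t)))
          · intro t
            have hexp : HasDerivAt (fun t : ℝ => Real.exp (-t)) (-Real.exp (-t)) t := by
              simpa using ((hasDerivAt_id t).neg.exp)
            have h2 : HasDerivAt (fun t : ℝ => Real.exp (-t) + t - 1) (-Real.exp (-t) + 1) t := by
              simpa using (hexp.fun_add (hasDerivAt_id t)).fun_sub (hasDerivAt_const t (1:ℝ))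
            have h3 : HasDerivAt (fun t : ℝ => t * (u / (1 + u))) (u / (1 + u)) t := by
              simpa using (hasDerivAt_id t).mul_const (u / (1 + u))
            have := ((hL t).fun_sub ((hasDerivAt_const t (Real.log (1 + u))).fun_add h3)).fun_sub
              (h2.const_mul C)
            convert this using 1
            rotate_left 2
            · ext s; ring
            · ring
            all_goals rfl
          · simp [hu]
          · exact hstep1
        have := hstep2 b hb
        rw [hla]
        linarith
      · -- b < 0 case
        rw [abs_of_neg hb]
        have hstep1 : ∀ t : ℝ, t ≤ 0 →
            Real.exp (a + t) / (1 + Real.exp (a + t)) - u / (1 + u) -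
              C * (Real.exp t - 1) ≤ 0 := by
          apply nonpos_on_Iic_of_deriv
            (f' := fun t => Real.exp (a + t) / (1 + Real.exp (a + t)) ^ 2 - C * Real.exp t)
          · intro t
            have he : HasDerivAt (fun t : ℝ => Real.exp (a + t)) (Real.exp (a + t)) t := by
              have : HasDerivAt (fun t : ℝ => a + t) 1 t := by
                simpa using (hasDerivAt_const t a).fun_add (hasDerivAt_id t)
              simpa using this.exp
            have h1e : HasDerivAt (fun t : ℝ => 1 + Real.exp (a + t)) (Real.exp (a + t)) t := by
              simpa using (hasDerivAt_const t (1:ℝ)).fun_add he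
            have hne : (1 : ℝ) + Real.exp (a + t) ≠ 0 := by positivity
            have hdiv : HasDerivAt (fun t => Real.exp (a + t) / (1 + Real.exp (a + t)))
                ((Real.exp (a + t) * (1 + Real.exp (a + t)) -
                  Real.exp (a + t) * Real.exp (a + t)) / (1 + Real.exp (a + t)) ^ 2) t :=
              he.div h1e hne
            have h2 : HasDerivAt (fun t : ℝ => u / (1 + u) + C * (Real.exp t - 1))
                (C * Real.exp t) t := by
              have := ((hasDerivAt_const t (u / (1 + u)))).fun_add
                (((Real.hasDerivAt_exp t).fun_sub (hasDerivAt_const t (1:ℝ))).const_mul C)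
              simpa using this
            have := hdiv.fun_sub h2
            convert this using 1
            rotate_left 2
            · ext s; ring
            · field_simp
              ring
            all_goals rfl
          · simp [hu]
          · intro t ht
            have hexp1 : Real.exp t ≤ 1 := Real.exp_le_one_iff.mpr ht
            have hepos : 0 < Real.exp (a + t) := Real.exp_pos _
            have h1epos : (0:ℝ) < 1 + Real.exp (a + t) := by linarith
            have heat : Real.exp (a + t) = u * Real.exp t := by
              rw [hu, ← Real.exp_add]
            have het : 0 < Real.exp t := Real.exp_pos t
            rw [heat, hCdef, sub_nonneg, div_mul_eq_mul_div,
              div_le_div_iff₀ (by positivity) (by positivity)]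
            nlinarith [mul_pos hu0 het, sq_nonneg (1 + u), mul_pos h1u h1u,
              mul_nonneg (mul_nonneg (mul_nonneg hu0.le het.le) (sub_nonneg.mpr hexp1))
                (by positivity : (0:ℝ) ≤ 2 + u + u * Real.exp t)]
        have hstep2 : ∀ t : ℝ, t ≤ 0 →
            0 ≤ Real.log (1 + Real.exp (a + t)) - Real.log (1 + u) - t * (u / (1 + u)) -
              C * (Real.exp t - t - 1) := by
          apply nonneg_on_Iic_of_deriv
            (f' := fun t => Real.exp (a + t) / (1 + Real.exp (a + t)) - u / (1 + u) -
              C * (Real.exp t - 1))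
          · intro t
            have h2 : HasDerivAt (fun t : ℝ => Real.exp t - t - 1) (Real.exp t - 1) t := by
              simpa using ((Real.hasDerivAt_exp t).fun_sub (hasDerivAt_id t)).fun_sub
                (hasDerivAt_const t (1:ℝ))
            have h3 : HasDerivAt (fun t : ℝ => t * (u / (1 + u))) (u / (1 + u)) t := by
              simpa using (hasDerivAt_id t).mul_const (u / (1 + u))
            have := ((hL t).fun_sub ((hasDerivAt_const t (Real.log (1 + u))).fun_add h3)).fun_sub
              (h2.const_mul C)
            convert this using 1
            rotate_left 2
            · ext s; ring
            · ring
            all_goals rfl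
          · simp [hu]
          · exact hstep1
        have := hstep2 b hb.le
        rw [hla]
        have hrw : Real.exp (-(-b)) = Real.exp b := by ring_nf
        rw [hrw]
        linarith
    refine ⟨by rw [hC]; exact key, ?_⟩
    have h3 := exp_cubic_bound |b| (abs_nonneg b)
    have hb2 : b ^ 2 = |b| ^ 2 := (sq_abs b).symm
    rw [hC, hb2]
    have hnn : (0:ℝ) ≤ C := hCpos.le
    exact mul_le_mul_of_nonneg_left h3 hnn
  · exact exp_cubic_bound
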